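/- Locality of linearizability for a multi-distributed ledger object: if H is a finite, complete, well-formed history over a finite set O of ledger objects and for every object D ∈ O the projection H|D is linearizable with respect to the ledger sequential specification, then H itself is linearizable: there exists a sequential permutation σ of all operations of H such that σ respects the happens-before order of H and, for every D ∈ O, the projection of σ onto D satisfies the ledger sequential specification. -/

import Mathlib

/-!
STATEMENT 12. Locality of linearizability for a multi-distributed ledger object: if H is
a finite, complete, well-formed history over a finite set O of ledger objects and for
every object D ∈ O the projection H|D is linearizable with respect to the ledger
sequential specification, then H itself is linearizable: there exists a sequential
permutation σ of all operations of H such that σ respects the happens-before order of H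
and, for every D ∈ O, the projection of σ onto D satisfies the ledger sequential
specification.

Modeling: a (complete) operation is a record consisting of the object it acts on, the
process issuing it, its action (a `get` returning a list of records, or an `append` of a
record), and the times of its invocation and matching response events; completeness is
thus built in.  A history is a finite list of such operations.  `π₁` happens before `π₂`
if `π₁`'s response time precedes `π₂`'s invocation time.  A sequential permutation of a
history is a list that is a permutation of it; it respects happens-before if no operation
is placed before one that happens before it.  The ledger sequential specification is the
inductive predicate `LedgerRun V ops`: starting from record sequence `V`, a `get` returns
the current sequence leaving it unchanged, an `append r` with `r` not in the sequence
extends it by `r`, and (idempotence) an `append r` with `r` already present leaves it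
unchanged.
-/

/-- Actions on a ledger: a `get` returning a sequence of records, or an `append` of a
record. -/
inductive LedgerAct (R : Type) where
  | get : List R → LedgerAct R
  | append : R → LedgerAct R

/-- A complete operation of a history: the object and process it belongs to, its action,
and the times of its invocation and response events. -/
structure LOp (O P R : Type) where
  obj : O
  proc : P
  act : LedgerAct R
  invT : ℕ
  resT : ℕ

/-- `π₁` happens before `π₂`: the response event of `π₁` precedes the invocation event
of `π₂`. -/
def hb {O P R : Type} (a b : LOp O P R) : Prop := a.resT < b.invT

/-- The ledger sequential specification: `LedgerRun V ops` holds when the sequence of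
operations `ops`, run sequentially from ledger state `V`, conforms to the specification:
a get returns the current sequence and leaves it unchanged; an append of a record not in
the sequence extends the sequence by it; an append of a record already present leaves the
sequence unchanged (idempotence). -/
inductive LedgerRun {O P R : Type} : List R → List (LOp O P R) → Prop
  | nil : ∀ V, LedgerRun V []
  | get : ∀ (V : List R) (op : LOp O P R) (t : List (LOp O P R)),
      op.act = LedgerAct.get V → LedgerRun V t → LedgerRun V (op :: t)
  | appendNew : ∀ (V : List R) (r : R) (op : LOp O P R) (t : List (LOp O P R)),
      op.act = LedgerAct.append r → r ∉ V →
      LedgerRun (V ++ [r]) t → LedgerRun V (op :: t)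
  | appendDup : ∀ (V : List R) (r : R) (op : LOp O P R) (t : List (LOp O P R)),
      op.act = LedgerAct.append r → r ∈ V →
      LedgerRun V t → LedgerRun V (op :: t)

/-- A sequence of operations respects the happens-before order: no operation is placed
before an operation that happens before it. -/
def RespectsHB {O P R : Type} (σ : List (LOp O P R)) : Prop :=
  σ.Pairwise (fun a b => ¬ hb b a)

/-- A history is well-formed if every operation's invocation precedes its response and
no two distinct operations of the same process overlap (each process invokes one
operation at a time; the history being a list of complete operations, it is complete). -/
def WellFormed {O P R : Type} (H : List (LOp O P R)) : Prop :=
  (∀ a ∈ H, a.invT < a.resT) ∧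
  (∀ a ∈ H, ∀ b ∈ H, a.proc = b.proc → a ≠ b → (a.resT < b.invT ∨ b.resT < a.invT))

section Aux
variable {α β : Type*}

/-- Extracting a head element from one block of a flatten. -/
lemma flatten_extract (Ds : List α) (hnd : Ds.Nodup) (g g' : α → List β)
    (D₀ : α) (hD₀ : D₀ ∈ Ds) (a : β)
    (h1 : g D₀ = a :: g' D₀) (h2 : ∀ D ∈ Ds, D ≠ D₀ → g D = g' D) :
    ((Ds.map g).flatten).Perm (a :: (Ds.map g').flatten) := by
  obtain ⟨A, B, rfl⟩ := List.append_of_mem hD₀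
  have hA : D₀ ∉ A := by
    intro h; exact (List.nodup_append'.mp hnd).2.2 h List.mem_cons_self
  have hB : D₀ ∉ B := by
    have := (List.nodup_append.mp hnd).2.1
    exact (List.nodup_cons.mp this).1
  have hmapA : A.map g = A.map g' := by
    apply List.map_congr_left
    intro D hD
    exact h2 D (by simp [hD]) (fun h => hA (h ▸ hD))
  have hmapB : B.map g = B.map g' := by
    apply List.map_congr_left
    intro D hD
    exact h2 D (by simp [hD]) (fun h => hB (h ▸ hD))
  simp only [List.map_append, List.map_cons, List.flatten_append, List.flatten_cons,
    hmapA, hmapB, h1]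
  have hmid := @List.perm_middle _ a ((A.map g').flatten) (g' D₀ ++ (B.map g').flatten)
  have e1 : (A.map g').flatten ++ (a :: g' D₀ ++ (B.map g').flatten)
      = (A.map g').flatten ++ a :: (g' D₀ ++ (B.map g').flatten) := by simp
  have e2 : a :: ((A.map g').flatten ++ (g' D₀ ++ (B.map g').flatten))
      = a :: ((A.map g').flatten ++ g' D₀ ++ (B.map g').flatten) := by
    simp [List.append_assoc]
  rw [e1]
  exact hmid

lemma flatten_perm (Ds : List α) (g g' : α → List β)
    (h : ∀ D ∈ Ds, (g D).Perm (g' D)) :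
    ((Ds.map g).flatten).Perm ((Ds.map g').flatten) := by
  induction Ds with
  | nil => simp
  | cons D Ds ih =>
    simp only [List.map_cons, List.flatten_cons]
    exact (h D (by simp)).append (ih (fun D hD => h D (by simp [hD])))

end Aux

lemma merge_lemma {O P R : Type} [DecidableEq O] (Ds : List O) (hnd : Ds.Nodup) :
    ∀ (n : ℕ) (f : O → List (LOp O P R)),
    (Ds.map f).flatten.length = n →
    (∀ D ∈ Ds, RespectsHB (f D)) →
    (∀ D ∈ Ds, ∀ x ∈ f D, x.invT < x.resT ∧ x.obj = D) →
    ∃ σ : List (LOp O P R), σ.Perm (Ds.map f).flatten ∧ RespectsHB σ ∧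
      ∀ D ∈ Ds, σ.filter (fun op => decide (op.obj = D)) = f D := by
  intro n
  induction n with
  | zero =>
    intro f hlen _ _
    have hnil : ∀ l ∈ Ds.map f, l = [] :=
      List.flatten_eq_nil_iff.mp (List.length_eq_zero_iff.mp hlen)
    have hfD : ∀ D ∈ Ds, f D = [] := fun D hD => hnil _ (List.mem_map_of_mem (f := f) hD)
    refine ⟨[], ?_, by simp [RespectsHB], ?_⟩
    · rw [List.length_eq_zero_iff.mp hlen]
    · intro D hD; simp [hfD D hD]
  | succ n ih =>
    intro f hlen hresp hgood
    -- there is a nonempty block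
    have hne : ∃ D ∈ Ds, f D ≠ [] := by
      by_contra hc
      push_neg at hc
      have : ∀ l ∈ Ds.map f, l = [] := by
        intro l hl
        obtain ⟨D, hD, rfl⟩ := List.mem_map.mp hl
        exact hc D hD
      have := List.flatten_eq_nil_iff.mpr this
      rw [this] at hlen
      simp at hlen
    set Es := Ds.filter (fun D => !(f D).isEmpty) with hEs
    have hEsne : Es ≠ [] := by
      obtain ⟨D, hD, hfne⟩ := hne
      intro h
      have : D ∈ Es := by
        simp [hEs, List.mem_filter, hD, List.isEmpty_iff, hfne]
      simp [h] at this
    -- pick head with minimal invocation time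
    have hargmin : ∃ D₀, D₀ ∈ Es.argmin (fun D => ((f D).head?.elim 0 (·.invT))) := by
      rcases Option.eq_none_or_eq_some (Es.argmin (fun D => ((f D).head?.elim 0 (·.invT)))) with h | ⟨D₀, h⟩
      · exact absurd (List.argmin_eq_none.mp h) hEsne
      · exact ⟨D₀, h⟩
    obtain ⟨D₀, hD₀arg⟩ := hargmin
    have hD₀Es : D₀ ∈ Es := List.argmin_mem hD₀arg
    have hD₀Ds : D₀ ∈ Ds := List.mem_of_mem_filter hD₀Es
    have hfD₀ne : f D₀ ≠ [] := by
      have := (List.mem_filter.mp hD₀Es).2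
      simpa [List.isEmpty_iff] using this
    obtain ⟨h, t, hft⟩ := List.exists_cons_of_ne_nil hfD₀ne
    set f' := Function.update f D₀ t with hf'
    have hupd : ∀ D ∈ Ds, D ≠ D₀ → f D = f' D := by
      intro D _ hne'
      simp [hf', Function.update_of_ne hne']
    have hf'D₀ : f' D₀ = t := by simp [hf']
    have hextract : ((Ds.map f).flatten).Perm (h :: (Ds.map f').flatten) :=
      flatten_extract Ds hnd f f' D₀ hD₀Ds h (by rw [hft, hf'D₀]) (fun D hD hne' => (hupd D hD hne'))
    have hlen' : (Ds.map f').flatten.length = n := by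
      have h2 := hextract.length_eq
      rw [hlen, List.length_cons] at h2
      omega
    have hresp' : ∀ D ∈ Ds, RespectsHB (f' D) := by
      intro D hD
      by_cases hD' : D = D₀
      · subst hD'
        rw [hf'D₀]
        have := hresp D hD
        rw [hft] at this
        exact (List.pairwise_cons.mp this).2
      · rw [← hupd D hD hD']; exact hresp D hD
    have hgood' : ∀ D ∈ Ds, ∀ x ∈ f' D, x.invT < x.resT ∧ x.obj = D := by
      intro D hD x hx
      by_cases hD' : D = D₀
      · subst hD'
        rw [hf'D₀] at hx
        exact hgood D hD x (by rw [hft]; exact List.mem_cons_of_mem _ hx)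
      · rw [← hupd D hD hD'] at hx; exact hgood D hD x hx
    obtain ⟨σ', hperm', hhb', hfilt'⟩ := ih f' hlen' hresp' hgood'
    refine ⟨h :: σ', ?_, ?_, ?_⟩
    · exact (hperm'.cons h).trans hextract.symm
    · rw [RespectsHB, List.pairwise_cons]
      constructor
      · -- no element of σ' happens before h
        intro x hx
        have hxmem : x ∈ (Ds.map f').flatten := hperm'.mem_iff.mp hx
        obtain ⟨l, hl, hxl⟩ := List.mem_flatten.mp hxmem
        obtain ⟨D, hD, rfl⟩ := List.mem_map.mp hl
        -- key : h.invT minimal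
        by_cases hD' : D = D₀
        · subst hD'
          rw [hf'D₀] at hxl
          have := hresp D hD
          rw [hft] at this
          exact (List.pairwise_cons.mp this).1 x hxl
        · rw [← hupd D hD hD'] at hxl
          have hfDne : f D ≠ [] := by intro hc; rw [hc] at hxl; simp at hxl
          have hDEs : D ∈ Es := by
            simp [hEs, List.mem_filter, hD, List.isEmpty_iff, hfDne]
          have hmin := List.le_of_mem_argmin hDEs hD₀arg
          obtain ⟨hd, td, hfd⟩ := List.exists_cons_of_ne_nil hfDne
          rw [hfd] at hmin
          rw [hft] at hmin
          simp only [List.head?_cons, Option.elim_some] at hmin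
          -- hmin : h.invT ≤ hd.invT
          rw [hfd] at hxl
          rcases List.mem_cons.mp hxl with rfl | hxtd
          · -- x = hd
            have hx2 := hgood D hD x (by rw [hfd]; exact List.mem_cons_self)
            intro hc
            rw [hb] at hc
            omega
          · have := hresp D hD
            rw [hfd] at this
            have hnb := (List.pairwise_cons.mp this).1 x hxtd
            rw [hb] at hnb ⊢
            omega
      · exact hhb'
    · intro D hD
      have hhobj : h.obj = D₀ :=
        (hgood D₀ hD₀Ds h (by rw [hft]; exact List.mem_cons_self)).2
      by_cases hD' : D = D₀
      · subst hD'
        rw [List.filter_cons]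
        simp only [hhobj, decide_true, if_true]
        rw [hfilt' D hD, hf'D₀, hft]
      · rw [List.filter_cons]
        have : (decide (h.obj = D)) = false := by
          simp [hhobj]; exact fun hc => hD' hc.symm
        rw [this]
        simp only [if_false, Bool.false_eq_true]
        rw [hfilt' D hD, ← hupd D hD hD']

lemma partition_perm {O P R : Type} [DecidableEq O] (Ds : List O) (hnd : Ds.Nodup) :
    ∀ (H : List (LOp O P R)), (∀ x ∈ H, x.obj ∈ Ds) →
    ((Ds.map (fun D => H.filter (fun op => decide (op.obj = D)))).flatten).Perm H := by
  intro H
  induction H with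
  | nil => intro _; simp
  | cons a H' ih =>
    intro hmem
    have haDs : a.obj ∈ Ds := hmem a List.mem_cons_self
    have hstep := flatten_extract Ds hnd
      (fun D => (a :: H').filter (fun op => decide (op.obj = D)))
      (fun D => H'.filter (fun op => decide (op.obj = D)))
      a.obj haDs a
      (by simp [List.filter_cons])
      (by
        intro D _ hne
        simp only [List.filter_cons]
        have : (decide (a.obj = D)) = false := by
          simp; exact fun hc => hne hc.symm
        rw [this]
        simp)
    exact hstep.trans ((ih (fun x hx => hmem x (List.mem_cons_of_mem _ hx))).cons a)

theorem mdlo_linearizability_locality {O P R : Type} [DecidableEq O] [Fintype O]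
    (H : List (LOp O P R))
    (h_wf : WellFormed H)
    -- for every object D ∈ O, the projection H|D is linearizable w.r.t. the ledger
    -- sequential specification
    (h_local : ∀ D : O, ∃ τ : List (LOp O P R),
      τ.Perm (H.filter (fun op => decide (op.obj = D))) ∧
      RespectsHB τ ∧ LedgerRun [] τ) :
    -- then H is linearizable: some sequential permutation σ of H respects
    -- happens-before and every per-object projection of σ satisfies the ledger
    -- sequential specification
    ∃ σ : List (LOp O P R), σ.Perm H ∧ RespectsHB σ ∧
      ∀ D : O, LedgerRun [] (σ.filter (fun op => decide (op.obj = D))) := by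
  choose f hperm hhb hrun using h_local
  set Ds := Finset.univ.toList (α := O) with hDs
  have hnd : Ds.Nodup := Finset.nodup_toList _
  have hgood : ∀ D ∈ Ds, ∀ x ∈ f D, x.invT < x.resT ∧ x.obj = D := by
    intro D _ x hx
    have hx' : x ∈ H.filter (fun op => decide (op.obj = D)) := (hperm D).mem_iff.mp hx
    have hxm := List.mem_filter.mp hx'
    refine ⟨h_wf.1 x hxm.1, by simpa using hxm.2⟩
  obtain ⟨σ, hσperm, hσhb, hσfilt⟩ :=
    merge_lemma Ds hnd (Ds.map f).flatten.length f rfl (fun D _ => hhb D) hgood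
  have hDall : ∀ D : O, D ∈ Ds := by intro D; simp [hDs]
  refine ⟨σ, ?_, hσhb, ?_⟩
  · have h1 : ((Ds.map f).flatten).Perm
        ((Ds.map (fun D => H.filter (fun op => decide (op.obj = D)))).flatten) :=
      flatten_perm Ds f _ (fun D _ => hperm D)
    have h2 := partition_perm Ds hnd H (fun x _ => hDall x.obj)
    exact hσperm.trans (h1.trans h2)
  · intro D
    rw [hσfilt D (hDall D)]
    exact hrun D
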